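/- Suppose b < 0, a > 0, c > 0, √(a²+c²) < |b|, and α ∈ (0, π/2) is the phase angle. Let γ₂ = arcsin(√(a²+c²)/|b|). If max{-θ₀, 2(γ₂ - α)} < θ < min{π, 2(π - γ₂ - α)} with 0 < θ₀ < π/4, then f''(θ) > 0. -/

import Mathlib

set_option maxHeartbeats 1000000


open Real

lemma aux_pos (b r s co S : ℝ) (hS : 0 < S)
    (hS2 : S ^ 2 = b ^ 2 + r ^ 2 + 2 * b * r * s)
    (hcs : co ^ 2 = 1 - s ^ 2)
    (hbs : b * s + r < 0) (hbrs : b + r * s < 0) (hbr0 : 0 < -(b * r)) :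
    0 < (-(b * r * s) / 2 * (2 * S) - b * r * co * (b * r * co / S)) / (2 * S) ^ 2 := by
  have hrhs : 0 < -(b * r) * ((b * s + r) * (b + r * s)) :=
    mul_pos hbr0 (mul_pos_of_neg_of_neg hbs hbrs)
  have key : -(b * r * s) / 2 * (2 * S) - b * r * co * (b * r * co / S) =
      -(b * r) * ((b * s + r) * (b + r * s)) / S := by
    rw [eq_div_iff hS.ne']
    field_simp
    linear_combination (-(b * r * s)) * hS2 + (-(b * r) ^ 2) * hcs
  rw [key]
  exact div_pos (div_pos hrhs hS) (by positivity)

theorem stmt_10 (a b c α θ₀ θ : ℝ)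
    (hb : b < 0) (ha : a > 0) (hc : c > 0)
    (hlt : Real.sqrt (a ^ 2 + c ^ 2) < |b|) (hpos : 0 < Real.sqrt (a ^ 2 + c ^ 2))
    (hα : α ∈ Set.Ioo 0 (π / 2))
    (hsin : Real.sin α = c / Real.sqrt (a ^ 2 + c ^ 2))
    (hcos : Real.cos α = a / Real.sqrt (a ^ 2 + c ^ 2))
    (hθ₀ : 0 < θ₀ ∧ θ₀ < π / 4)
    (γ₂ : ℝ) (hγ₂ : γ₂ = Real.arcsin (Real.sqrt (a ^ 2 + c ^ 2) / |b|))
    (hθl : max (-θ₀) (2 * (γ₂ - α)) < θ)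
    (hθr : θ < min π (2 * (π - γ₂ - α)))
    (f : ℝ → ℝ)
    (hf : ∀ x : ℝ, f x = Real.sqrt (a ^ 2 + b ^ 2 + c ^ 2 +
        2 * b * Real.sqrt (a ^ 2 + c ^ 2) * Real.sin (x / 2 + α))) :
    0 < deriv (deriv f) θ := by
  obtain ⟨hα0, hα2⟩ := hα
  set r := Real.sqrt (a ^ 2 + c ^ 2) with hr
  have hr2 : r ^ 2 = a ^ 2 + c ^ 2 := Real.sq_sqrt (by positivity)
  have habs : |b| = -b := abs_of_neg hb
  have hbr : b + r < 0 := by rw [habs] at hlt; linarith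
  set g : ℝ → ℝ := fun x => a ^ 2 + b ^ 2 + c ^ 2 + 2 * b * r * Real.sin (x / 2 + α) with hg
  have hgpos : ∀ x, 0 < g x := by
    intro x
    have hs : Real.sin (x / 2 + α) ≤ 1 := Real.sin_le_one _
    have h2 : 2 * b * r < 0 := by nlinarith
    have h3 : 2 * b * r * Real.sin (x / 2 + α) ≥ 2 * b * r := by nlinarith
    have h4 : (0:ℝ) < (b + r) * (b + r) := mul_pos_of_neg_of_neg hbr hbr
    simp only [hg]
    nlinarith
  -- derivative of g
  have hgd : ∀ x, HasDerivAt g (b * r * Real.cos (x / 2 + α)) x := by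
    intro x
    have h1 : HasDerivAt (fun x : ℝ => x / 2 + α) (1 / 2) x := by
      simpa using ((hasDerivAt_id x).div_const 2).add_const α
    have h2 : HasDerivAt (fun x : ℝ => Real.sin (x / 2 + α))
        (Real.cos (x / 2 + α) * (1 / 2)) x := (Real.hasDerivAt_sin _).comp x h1
    have h3 := (h2.const_mul (2 * b * r)).const_add (a ^ 2 + b ^ 2 + c ^ 2)
    have he : b * r * Real.cos (x / 2 + α) = 2 * b * r * (Real.cos (x / 2 + α) * (1 / 2)) := by
      ring
    rw [he]
    exact h3
  have hfe : f = fun x => Real.sqrt (g x) := funext hf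
  have hfd : ∀ x, HasDerivAt f (b * r * Real.cos (x / 2 + α) / (2 * Real.sqrt (g x))) x := by
    intro x
    have h := (Real.hasDerivAt_sqrt (ne_of_gt (hgpos x))).comp x (hgd x)
    rw [hfe]
    refine h.congr_deriv ?_
    field_simp
  have hdf : deriv f = fun x => b * r * Real.cos (x / 2 + α) / (2 * Real.sqrt (g x)) :=
    funext fun x => (hfd x).deriv
  -- second derivative
  have hsg : (0:ℝ) < Real.sqrt (g θ) := Real.sqrt_pos.mpr (hgpos θ)
  have hsg2 : Real.sqrt (g θ) ^ 2 = g θ := Real.sq_sqrt (le_of_lt (hgpos θ))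
  -- numerator derivative
  have hN : HasDerivAt (fun x => b * r * Real.cos (x / 2 + α)) (-(b * r * Real.sin (θ / 2 + α)) / 2) θ := by
    have h1 : HasDerivAt (fun x : ℝ => x / 2 + α) (1 / 2) θ := by
      simpa using ((hasDerivAt_id θ).div_const 2).add_const α
    have h2 : HasDerivAt (fun x : ℝ => Real.cos (x / 2 + α))
        (-Real.sin (θ / 2 + α) * (1 / 2)) θ := (Real.hasDerivAt_cos _).comp θ h1
    have h3 := h2.const_mul (b * r)
    refine h3.congr_deriv ?_
    ring
  have hD : HasDerivAt (fun x => 2 * Real.sqrt (g x))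
      (b * r * Real.cos (θ / 2 + α) / Real.sqrt (g θ)) θ := by
    have h := ((Real.hasDerivAt_sqrt (ne_of_gt (hgpos θ))).comp θ (hgd θ)).const_mul 2
    refine h.congr_deriv ?_
    field_simp
  have hD0 : (2 : ℝ) * Real.sqrt (g θ) ≠ 0 := by positivity
  have hdd : HasDerivAt (deriv f)
      ((-(b * r * Real.sin (θ / 2 + α)) / 2 * (2 * Real.sqrt (g θ)) -
        b * r * Real.cos (θ / 2 + α) * (b * r * Real.cos (θ / 2 + α) / Real.sqrt (g θ))) /
        (2 * Real.sqrt (g θ)) ^ 2) θ := by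
    rw [hdf]
    exact hN.div hD hD0
  rw [hdd.deriv]
  clear_value r g
  -- positivity
  -- facts about sin (θ / 2 + α)
  have hkpos : (0:ℝ) < -b := by linarith
  have hrk1 : r / |b| < 1 := by
    rw [div_lt_one (by rw [habs]; linarith)]
    exact hlt
  have hrk0 : 0 < r / |b| := div_pos hpos (by rw [habs]; linarith)
  have hsinγ : Real.sin γ₂ = r / |b| := by
    rw [hγ₂]
    exact Real.sin_arcsin (by linarith) (le_of_lt hrk1)
  have hγpos : 0 < γ₂ := by rw [hγ₂]; exact Real.arcsin_pos.mpr hrk0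
  have hγlt : γ₂ < π / 2 := by rw [hγ₂]; exact Real.arcsin_lt_pi_div_two.mpr hrk1
  have hul : γ₂ < θ / 2 + α := by
    have := lt_of_le_of_lt (le_max_right (-θ₀) (2 * (γ₂ - α))) hθl
    linarith
  have hur : θ / 2 + α < π - γ₂ := by
    have := lt_of_lt_of_le hθr (min_le_right π (2 * (π - γ₂ - α)))
    linarith
  have hπ : (0:ℝ) < π := Real.pi_pos
  have hsinu : r / |b| < Real.sin (θ / 2 + α) := by
    rw [← hsinγ]
    rcases le_or_gt (θ / 2 + α) (π / 2) with h | h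
    · exact Real.strictMonoOn_sin ⟨by linarith, by linarith⟩ ⟨by linarith, h⟩ hul
    · have : Real.sin (θ / 2 + α) = Real.sin (π - (θ / 2 + α)) := (Real.sin_pi_sub (θ / 2 + α)).symm
      rw [this]
      exact Real.strictMonoOn_sin ⟨by linarith, by linarith⟩ ⟨by linarith, by linarith⟩
        (by linarith)
  rw [habs] at hsinu
  have hsu1 : Real.sin (θ / 2 + α) ≤ 1 := Real.sin_le_one (θ / 2 + α)
  have hbs : b * Real.sin (θ / 2 + α) + r < 0 := by
    have h := (div_lt_iff₀ hkpos).mp hsinu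
    linarith
  have hbrs : b + r * Real.sin (θ / 2 + α) < 0 := by
    have : r * Real.sin (θ / 2 + α) ≤ r := mul_le_of_le_one_right hpos.le hsu1
    linarith
  have hcs : Real.cos (θ / 2 + α) ^ 2 = 1 - Real.sin (θ / 2 + α) ^ 2 := by
    have := Real.sin_sq_add_cos_sq (θ / 2 + α)
    linarith
  have hgθ : g θ = a ^ 2 + b ^ 2 + c ^ 2 + 2 * b * r * Real.sin (θ / 2 + α) := by rw [hg]
  have hS2 : Real.sqrt (g θ) ^ 2 = b ^ 2 + r ^ 2 + 2 * b * r * Real.sin (θ / 2 + α) := by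
    rw [hsg2, hgθ, hr2]; ring
  exact aux_pos b r (Real.sin (θ / 2 + α)) (Real.cos (θ / 2 + α)) (Real.sqrt (g θ)) hsg hS2
    hcs hbs hbrs (neg_pos.mpr (mul_neg_of_neg_of_pos hb hpos))
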